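/- Let ħ > 0, let H : ℝ² → ℝ be differentiable, let φ : ℝ × ℝ² → ℝ be an arbitrary real-valued function, and let χ : ℝ × ℝ² → ℂ be differentiable and satisfy the phase-modified Koopman–von Neumann equation ∂_t χ(t, z) = {H, χ(t, ·)}(z) − (i/ħ)·φ(t, z)·χ(t, z) for all (t, z) ∈ ℝ × ℝ². Then the density f(t, z) := |χ(t, z)|² satisfies the classical Liouville equation ∂_t f(t, z) = {H, f(t, ·)}(z) for all (t, z). -/

import Mathlib

open Complex

lemma fderiv_normSq_comp (χ : ℝ × (ℝ × ℝ) → ℂ) (hχ : Differentiable ℝ χ)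
    (x : ℝ × (ℝ × ℝ)) (v : ℝ × (ℝ × ℝ)) :
    fderiv ℝ (fun x => Complex.normSq (χ x)) x v
      = 2 * ((χ x).re * (fderiv ℝ χ x v).re + (χ x).im * (fderiv ℝ χ x v).im) := by
  have hre : HasFDerivAt (fun x => (χ x).re)
      (Complex.reCLM.comp (fderiv ℝ χ x)) x :=
    (Complex.reCLM.hasFDerivAt.comp x (hχ x).hasFDerivAt)
  have him : HasFDerivAt (fun x => (χ x).im)
      (Complex.imCLM.comp (fderiv ℝ χ x)) x :=
    (Complex.imCLM.hasFDerivAt.comp x (hχ x).hasFDerivAt)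
  have h : HasFDerivAt (fun x => Complex.normSq (χ x))
      ((χ x).re • (Complex.reCLM.comp (fderiv ℝ χ x))
        + (χ x).re • (Complex.reCLM.comp (fderiv ℝ χ x))
        + ((χ x).im • (Complex.imCLM.comp (fderiv ℝ χ x))
          + (χ x).im • (Complex.imCLM.comp (fderiv ℝ χ x)))) x := by
    have := (hre.mul hre).add (him.mul him)
    exact this.congr_of_eventuallyEq (Filter.Eventually.of_forall fun y => by simp [Complex.normSq_apply])
  rw [h.fderiv]
  simp
  ring

/-- If a Koopman wavefunction `χ` satisfies the phase-modified Koopman–von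
Neumann equation `∂_t χ = {H, χ} − (i/ħ)·φ·χ` for an arbitrary real phase
function `φ`, then the density `f = |χ|²` satisfies the classical Liouville
equation `∂_t f = {H, f}`. -/
theorem phase_modified_kvn_gives_liouville
    (hbar : ℝ) (hhbar : 0 < hbar)
    (H : ℝ × ℝ → ℝ) (hH : Differentiable ℝ H)
    (φ : ℝ × (ℝ × ℝ) → ℝ)
    (χ : ℝ × (ℝ × ℝ) → ℂ) (hχ : Differentiable ℝ χ)
    (hkvn : ∀ (t : ℝ) (z : ℝ × ℝ),
      fderiv ℝ χ (t, z) ((1 : ℝ), ((0 : ℝ), (0 : ℝ)))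
        = (fderiv ℝ H z ((1 : ℝ), (0 : ℝ))) •
            fderiv ℝ χ (t, z) ((0 : ℝ), ((0 : ℝ), (1 : ℝ)))
          - (fderiv ℝ H z ((0 : ℝ), (1 : ℝ))) •
            fderiv ℝ χ (t, z) ((0 : ℝ), ((1 : ℝ), (0 : ℝ)))
          - (Complex.I / (hbar : ℂ)) * (φ (t, z) : ℂ) * χ (t, z)) :
    ∀ (t : ℝ) (z : ℝ × ℝ),
      fderiv ℝ (fun x : ℝ × (ℝ × ℝ) => Complex.normSq (χ x)) (t, z)
          ((1 : ℝ), ((0 : ℝ), (0 : ℝ)))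
        = (fderiv ℝ H z ((1 : ℝ), (0 : ℝ))) *
            fderiv ℝ (fun x : ℝ × (ℝ × ℝ) => Complex.normSq (χ x)) (t, z)
              ((0 : ℝ), ((0 : ℝ), (1 : ℝ)))
          - (fderiv ℝ H z ((0 : ℝ), (1 : ℝ))) *
            fderiv ℝ (fun x : ℝ × (ℝ × ℝ) => Complex.normSq (χ x)) (t, z)
              ((0 : ℝ), ((1 : ℝ), (0 : ℝ))) := by
  intro t z
  rw [fderiv_normSq_comp χ hχ, fderiv_normSq_comp χ hχ, fderiv_normSq_comp χ hχ]
  rw [hkvn t z]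
  simp [Complex.ext_iff, Complex.div_re, Complex.div_im, Complex.normSq_apply]
  ring
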